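/- In a Galton-Watson tree with neutral mutations started from a ≥ 1 ancestors, with offspring law π on ℤ₊² (for clonal and mutant children), the joint law of the total type-0 population T₀ and the number of first-type mutants M₁ is given by P_a(T₀ = k, M₁ = l) = (a/k)·π^{*k}_{k-a, l} for k ≥ a ≥ 1 and l ≥ 0, where π^{*k} denotes the k-fold convolution of π. -/

import Mathlib

/-- Convolution of two (sub)probability functions on ℤ₊². -/
def conv2 (μ ν : ℕ × ℕ → ℝ) : ℕ × ℕ → ℝ := fun p =>
  ∑ a ∈ Finset.range (p.1 + 1), ∑ b ∈ Finset.range (p.2 + 1),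
    μ (a, b) * ν (p.1 - a, p.2 - b)

/-- k-fold convolution power on ℤ₊². -/
def convPow2 (μ : ℕ × ℕ → ℝ) : ℕ → ℕ × ℕ → ℝ
  | 0 => fun p => if p = (0, 0) then 1 else 0
  | k + 1 => conv2 (convPow2 μ k) μ

open Finset PowerSeries

noncomputable def T2 (μ : ℕ × ℕ → ℝ) : PowerSeries (PowerSeries ℝ) :=
  PowerSeries.mk fun n => PowerSeries.mk fun l => μ (n, l)

lemma coeff_T2 (μ : ℕ × ℕ → ℝ) (n l : ℕ) :
    PowerSeries.coeff l (PowerSeries.coeff n (T2 μ)) = μ (n, l) := by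
  simp [T2]

lemma T2_mul (μ ν : ℕ × ℕ → ℝ) : T2 (conv2 μ ν) = T2 μ * T2 ν := by
  ext n l
  rw [PowerSeries.coeff_mul, map_sum]
  simp only [PowerSeries.coeff_mul]
  rw [Finset.Nat.sum_antidiagonal_eq_sum_range_succ_mk]
  simp only [Finset.Nat.sum_antidiagonal_eq_sum_range_succ_mk]
  simp [T2, conv2]

noncomputable def c2 (φ : PowerSeries (PowerSeries ℝ)) (n l : ℕ) : ℝ :=
  PowerSeries.coeff l (PowerSeries.coeff n φ)

lemma conv2_c2 (μ ν : ℕ × ℕ → ℝ) (n l : ℕ) :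
    conv2 μ ν (n, l) = c2 (T2 μ * T2 ν) n l := by
  rw [← T2_mul]; exact (coeff_T2 _ _ _).symm

lemma T2_pow (μ : ℕ × ℕ → ℝ) (k : ℕ) : T2 (convPow2 μ k) = (T2 μ) ^ k := by
  induction k with
  | zero =>
    ext n l
    simp only [pow_zero, T2, convPow2, PowerSeries.coeff_mk, PowerSeries.coeff_one,
      Prod.mk.injEq]
    by_cases hn : n = 0 <;> by_cases hl : l = 0 <;>
      simp [hn, hl, PowerSeries.coeff_one]
  | succ k ih =>
    show T2 (conv2 _ _) = _
    rw [T2_mul, ih, pow_succ]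

lemma convPow2_c2 (μ : ℕ × ℕ → ℝ) (k n l : ℕ) :
    convPow2 μ k (n, l) = c2 ((T2 μ) ^ k) n l := by
  rw [← T2_pow]; exact (coeff_T2 _ _ _).symm

lemma convPow2_add (μ : ℕ × ℕ → ℝ) (s t n l : ℕ) :
    convPow2 μ (s + t) (n, l) = conv2 (convPow2 μ s) (convPow2 μ t) (n, l) := by
  rw [conv2_c2, convPow2_c2, T2_pow, T2_pow, ← pow_add]

lemma conv2_comm (μ ν : ℕ × ℕ → ℝ) (n l : ℕ) :
    conv2 μ ν (n, l) = conv2 ν μ (n, l) := by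
  rw [conv2_c2, conv2_c2, mul_comm]

lemma conv2_swap (f g h : ℕ × ℕ → ℝ) (n l : ℕ) :
    conv2 (conv2 f g) h (n, l) = conv2 (conv2 f h) g (n, l) := by
  have e1 : T2 (conv2 f g) * T2 h = T2 (conv2 f h) * T2 g := by
    rw [T2_mul, T2_mul, mul_right_comm]
  rw [conv2_c2, conv2_c2, e1]

lemma conv2_pow_zero (μ ν : ℕ × ℕ → ℝ) (n l : ℕ) :
    conv2 (convPow2 μ 0) ν (n, l) = ν (n, l) := by
  have : T2 (convPow2 μ 0) * T2 ν = T2 ν := by rw [T2_pow, pow_zero, one_mul]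
  rw [conv2_c2, this, c2, coeff_T2]

lemma convPow2_one (μ : ℕ × ℕ → ℝ) (n l : ℕ) :
    convPow2 μ 1 (n, l) = μ (n, l) := by
  show conv2 (convPow2 μ 0) μ (n, l) = μ (n, l)
  exact conv2_pow_zero μ μ n l

lemma sum_extend {c k : ℕ} (h : c ≤ k) (f : ℕ → ℝ) :
    ∑ i ∈ Finset.range (c + 1), f i
      = ∑ i ∈ Finset.range (k + 1), if i ≤ c then f i else 0 := by
  rw [← Finset.sum_filter]
  congr 1
  ext x
  simp only [Finset.mem_filter, Finset.mem_range]
  omega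

lemma moment (π : ℕ × ℕ → ℝ) :
    ∀ k n l : ℕ, ((k : ℝ) + 1) * conv2 (convPow2 π k) (fun p => (p.1 : ℝ) * π p) (n, l)
      = (n : ℝ) * convPow2 π (k + 1) (n, l) := by
  intro k
  induction k with
  | zero =>
    intro n l
    rw [conv2_pow_zero, convPow2_one]
    push_cast
    ring
  | succ k ih =>
    intro n l
    have hk1 : ((k : ℝ) + 1) ≠ 0 := by positivity
    have hIHpt : ∀ a b : ℕ, conv2 (convPow2 π k) (fun p => (p.1 : ℝ) * π p) (a, b)
        = (a : ℝ) / ((k : ℝ) + 1) * convPow2 π (k + 1) (a, b) := by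
      intro a b
      have h := ih a b
      field_simp
      linarith [h]
    set P := convPow2 π (k + 1) with hP
    set A := conv2 P (fun p => (p.1 : ℝ) * π p) (n, l) with hA
    have hswap : A = conv2 (conv2 (convPow2 π k) (fun p => (p.1 : ℝ) * π p)) π (n, l) := by
      rw [hA, hP]
      show conv2 (conv2 (convPow2 π k) π) _ (n, l) = _
      exact conv2_swap _ _ _ n l
    have hS1 : ((k : ℝ) + 1) * A
        = ∑ a ∈ Finset.range (n + 1), ∑ b ∈ Finset.range (l + 1),
            (a : ℝ) * (P (a, b) * π (n - a, l - b)) := by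
      rw [hswap]
      show ((k : ℝ) + 1) * (∑ a ∈ Finset.range (n + 1), ∑ b ∈ Finset.range (l + 1),
        conv2 (convPow2 π k) (fun p => (p.1 : ℝ) * π p) (a, b) * π (n - a, l - b)) = _
      rw [Finset.mul_sum]
      refine Finset.sum_congr rfl fun a _ => ?_
      rw [Finset.mul_sum]
      refine Finset.sum_congr rfl fun b _ => ?_
      rw [hIHpt a b]
      field_simp
    have hS2 : A = ∑ a ∈ Finset.range (n + 1), ∑ b ∈ Finset.range (l + 1),
        ((n - a : ℕ) : ℝ) * (P (a, b) * π (n - a, l - b)) := by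
      rw [hA]
      show (∑ a ∈ Finset.range (n + 1), ∑ b ∈ Finset.range (l + 1),
        P (a, b) * (((n - a : ℕ) : ℝ) * π (n - a, l - b))) = _
      exact Finset.sum_congr rfl fun a _ => Finset.sum_congr rfl fun b _ => by ring
    have hsum : ((k : ℝ) + 1) * A + A = (n : ℝ) * convPow2 π (k + 2) (n, l) := by
      rw [hS1]
      conv_lhs => rw [hS2]
      rw [← Finset.sum_add_distrib]
      have : convPow2 π (k + 2) (n, l) = conv2 P π (n, l) := rfl
      rw [this]
      show _ = (n:ℝ) * ∑ a ∈ Finset.range (n + 1), ∑ b ∈ Finset.range (l + 1),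
        P (a, b) * π (n - a, l - b)
      rw [Finset.mul_sum]
      refine Finset.sum_congr rfl fun a ha => ?_
      rw [← Finset.sum_add_distrib, Finset.mul_sum]
      refine Finset.sum_congr rfl fun b _ => ?_
      have han : a ≤ n := Nat.lt_succ_iff.mp (Finset.mem_range.mp ha)
      have : ((n - a : ℕ) : ℝ) = (n : ℝ) - (a : ℝ) := by
        rw [Nat.cast_sub han]
      rw [this]
      ring
    have hgoal : ((k : ℝ) + 1 + 1) * A = (n : ℝ) * convPow2 π (k + 2) (n, l) := by
      linarith [hsum]
    push_cast
    convert hgoal using 2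

lemma convPow2_supp (μ : ℕ × ℕ → ℝ) (hμ0 : ∀ m, μ (0, m) = 0) :
    ∀ b n m : ℕ, n < b → convPow2 μ b (n, m) = 0 := by
  intro b
  induction b with
  | zero => intro n m h; omega
  | succ b ih =>
    intro n m h
    show conv2 (convPow2 μ b) μ (n, m) = 0
    refine Finset.sum_eq_zero fun p hp => Finset.sum_eq_zero fun q hq => ?_
    rcases lt_or_ge p b with hpb | hpb
    · rw [ih p q hpb, zero_mul]
    · have hpn : p ≤ n := Nat.lt_succ_iff.mp (Finset.mem_range.mp hp)
      have : n - p = 0 := by omega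
      rw [this, hμ0, mul_zero]

lemma sum4_swap (s t : Finset ℕ) (F : ℕ → ℕ → ℕ → ℕ → ℝ) :
    ∑ p ∈ s, ∑ q ∈ t, ∑ i ∈ s, ∑ j ∈ t, F p q i j
      = ∑ i ∈ s, ∑ j ∈ t, ∑ p ∈ s, ∑ q ∈ t, F p q i j := by
  calc ∑ p ∈ s, ∑ q ∈ t, ∑ i ∈ s, ∑ j ∈ t, F p q i j
      = ∑ p ∈ s, ∑ i ∈ s, ∑ q ∈ t, ∑ j ∈ t, F p q i j :=
        Finset.sum_congr rfl fun p _ => Finset.sum_comm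
    _ = ∑ i ∈ s, ∑ p ∈ s, ∑ q ∈ t, ∑ j ∈ t, F p q i j := Finset.sum_comm
    _ = ∑ i ∈ s, ∑ p ∈ s, ∑ j ∈ t, ∑ q ∈ t, F p q i j :=
        Finset.sum_congr rfl fun i _ => Finset.sum_congr rfl fun p _ => Finset.sum_comm
    _ = ∑ i ∈ s, ∑ j ∈ t, ∑ p ∈ s, ∑ q ∈ t, F p q i j :=
        Finset.sum_congr rfl fun i _ => Finset.sum_comm

lemma step_lemma (π μ : ℕ × ℕ → ℝ) (hμ0 : ∀ m, μ (0, m) = 0)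
    (hfin : ∀ n m : ℕ, μ (n + 1, m) = ∑ i ∈ Finset.range (n + 1), ∑ j ∈ Finset.range (m + 1),
      π (i, j) * convPow2 μ i (n, m - j)) :
    ∀ a k l : ℕ, convPow2 μ (a + 1) (k + 1, l)
      = ∑ i ∈ Finset.range (k + 1), ∑ j ∈ Finset.range (l + 1),
          π (i, j) * convPow2 μ (a + i) (k, l - j) := by
  intro a k l
  have hsupp := convPow2_supp μ hμ0
  set A := convPow2 μ a with hA
  set G : ℕ → ℕ → ℕ → ℕ → ℝ := fun p q i j =>
    if q + j ≤ l then A (p, q) * π (i, j) * convPow2 μ i (k - p, l - (q + j)) else 0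
    with hG
  have key : ∀ p ∈ Finset.range (k + 1), ∀ q ∈ Finset.range (l + 1),
      A (p, q) * μ (k + 1 - p, l - q)
        = ∑ i ∈ Finset.range (k + 1), ∑ j ∈ Finset.range (l + 1), G p q i j := by
    intro p hp q hq
    have hpk : p ≤ k := Nat.lt_succ_iff.mp (Finset.mem_range.mp hp)
    have hql : q ≤ l := Nat.lt_succ_iff.mp (Finset.mem_range.mp hq)
    have hp1 : k + 1 - p = (k - p) + 1 := by omega
    rw [hp1, hfin (k - p) (l - q), Finset.mul_sum]
    -- now : ∑ i ∈ range (k-p+1), A (p,q) * (∑ j ∈ range (l-q+1), π (i,j) * B i (k-p, l-q-j))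
    have inner_eq : ∀ i : ℕ,
        A (p, q) * (∑ j ∈ Finset.range (l - q + 1), π (i, j) * convPow2 μ i (k - p, l - q - j))
          = ∑ j ∈ Finset.range (l + 1), G p q i j := by
      intro i
      rw [Finset.mul_sum, sum_extend (Nat.sub_le l q)]
      refine Finset.sum_congr rfl fun j _ => ?_
      by_cases hj : j ≤ l - q
      · rw [if_pos hj, hG]
        simp only
        rw [if_pos (by omega : q + j ≤ l), show l - q - j = l - (q + j) by omega]
        ring
      · rw [if_neg hj, hG]
        simp only
        rw [if_neg (by omega : ¬ q + j ≤ l)]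
    simp only [inner_eq]
    rw [sum_extend (Nat.sub_le k p)]
    refine Finset.sum_congr rfl fun i _ => ?_
    by_cases hi : i ≤ k - p
    · rw [if_pos hi]
    · rw [if_neg hi]
      refine (Finset.sum_eq_zero fun j _ => ?_).symm
      rw [hG]
      simp only
      split_ifs with h
      · rw [hsupp i (k - p) (l - (q + j)) (by omega), mul_zero]
      · rfl
  have key2 : ∀ i ∈ Finset.range (k + 1), ∀ j ∈ Finset.range (l + 1),
      π (i, j) * convPow2 μ (a + i) (k, l - j)
        = ∑ p ∈ Finset.range (k + 1), ∑ q ∈ Finset.range (l + 1), G p q i j := by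
    intro i hi j hj
    have hjl : j ≤ l := Nat.lt_succ_iff.mp (Finset.mem_range.mp hj)
    rw [convPow2_add μ a i k (l - j)]
    show π (i, j) * (∑ p ∈ Finset.range (k + 1), ∑ q ∈ Finset.range (l - j + 1),
      A (p, q) * convPow2 μ i (k - p, l - j - q)) = _
    rw [Finset.mul_sum]
    refine Finset.sum_congr rfl fun p _ => ?_
    rw [Finset.mul_sum, sum_extend (Nat.sub_le l j)]
    refine Finset.sum_congr rfl fun q _ => ?_
    by_cases hq : q ≤ l - j
    · rw [if_pos hq, hG]
      simp only
      rw [if_pos (by omega : q + j ≤ l), show l - j - q = l - (q + j) by omega]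
      ring
    · rw [if_neg hq, hG]
      simp only
      rw [if_neg (by omega : ¬ q + j ≤ l)]
  have h1 : convPow2 μ (a + 1) (k + 1, l)
      = ∑ p ∈ Finset.range (k + 2), ∑ q ∈ Finset.range (l + 1), A (p, q) * μ (k + 1 - p, l - q) :=
    rfl
  rw [h1, Finset.sum_range_succ]
  have hlast : ∑ q ∈ Finset.range (l + 1), A (k + 1, q) * μ (k + 1 - (k + 1), l - q) = 0 := by
    refine Finset.sum_eq_zero fun q _ => ?_
    rw [Nat.sub_self, hμ0, mul_zero]
  rw [hlast, add_zero]
  rw [Finset.sum_congr rfl fun p hp => Finset.sum_congr rfl fun q hq => key p hp q hq]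
  rw [sum4_swap]
  exact (Finset.sum_congr rfl fun i hi => Finset.sum_congr rfl fun j hj =>
    key2 i hi j hj).symm

/-- Otter–Dwass / Lagrange inversion formula for a Galton-Watson forest with neutral
mutations: started from `a ≥ 1` ancestors (law = a-fold convolution of the one-ancestor
law `μ`, which satisfies the branching recursion), the joint law of `(T₀, M₁)` is
`P_a(T₀ = k, M₁ = l) = (a/k)·π^{*k}_{k-a, l}` for `k ≥ a ≥ 1`, `l ≥ 0`. -/
theorem gw_neutral_mutations_otter_dwass
    (π : ℕ × ℕ → ℝ) (hπnn : ∀ kl, 0 ≤ π kl) (hπ1 : ∑' kl : ℕ × ℕ, π kl = 1)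
    (μ : ℕ × ℕ → ℝ) (hμnn : ∀ kl, 0 ≤ μ kl) (hμ1 : ∑' kl : ℕ × ℕ, μ kl = 1)
    (hrec : ∀ n m : ℕ, μ (n, m) =
      ∑' kl : ℕ × ℕ,
        if kl.2 ≤ m ∧ 1 ≤ n then π kl * convPow2 μ kl.1 (n - 1, m - kl.2) else 0) :
    ∀ a k l : ℕ, 1 ≤ a → a ≤ k →
      convPow2 μ a (k, l) = ((a : ℝ) / k) * convPow2 π k (k - a, l) := by
  have hμ0 : ∀ m, μ (0, m) = 0 := by
    intro m
    rw [hrec 0 m]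
    simp
  have hsupp := convPow2_supp μ hμ0
  have hfin : ∀ n m : ℕ, μ (n + 1, m)
      = ∑ i ∈ Finset.range (n + 1), ∑ j ∈ Finset.range (m + 1),
          π (i, j) * convPow2 μ i (n, m - j) := by
    intro n m
    rw [hrec (n + 1) m]
    rw [tsum_eq_sum (s := (Finset.range (n + 1)) ×ˢ (Finset.range (m + 1)))
      (by
        intro kl hkl
        simp only [Finset.mem_product, Finset.mem_range, not_and_or, not_lt] at hkl
        by_cases h2 : kl.2 ≤ m
        · have h1 : n + 1 ≤ kl.1 := by omega
          rw [if_pos ⟨h2, by omega⟩, hsupp kl.1 (n + 1 - 1) (m - kl.2) (by omega), mul_zero]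
        · rw [if_neg (by tauto)])]
    rw [Finset.sum_product]
    refine Finset.sum_congr rfl fun i hi => Finset.sum_congr rfl fun j hj => ?_
    have hjm : j ≤ m := Nat.lt_succ_iff.mp (Finset.mem_range.mp hj)
    rw [if_pos ⟨hjm, by omega⟩]
    norm_num
  have main : ∀ k a l : ℕ, 1 ≤ a → a ≤ k →
      convPow2 μ a (k, l) = ((a : ℝ) / k) * convPow2 π k (k - a, l) := by
    intro k
    induction k with
    | zero => intro a l ha hak; omega
    | succ k ih =>
      intro a l ha hak
      obtain ⟨a', rfl⟩ : ∃ a', a = a' + 1 := ⟨a - 1, by omega⟩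
      rw [step_lemma π μ hμ0 hfin a' k l]
      rcases Nat.eq_zero_or_pos k with hk0 | hk
      · subst hk0
        have ha0 : a' = 0 := by omega
        subst ha0
        rw [Finset.sum_range_one]
        have hterm : ∀ j ∈ Finset.range (l + 1),
            π (0, j) * convPow2 μ (0 + 0) (0, l - j) = if j = l then π (0, j) else 0 := by
          intro j hj
          have hjl : j ≤ l := Nat.lt_succ_iff.mp (Finset.mem_range.mp hj)
          show π (0, j) * (if ((0, l - j) : ℕ × ℕ) = (0, 0) then (1 : ℝ) else 0) = _
          by_cases h : j = l
          · subst h; simp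
          · rw [if_neg (by simp only [Prod.mk.injEq]; omega), if_neg h, mul_zero]
        rw [Finset.sum_congr rfl hterm, Finset.sum_ite_eq' (Finset.range (l + 1)) l
          (fun j => π (0, j))]
        rw [if_pos (Finset.mem_range.mpr (by omega))]
        show π (0, l) = ((1 : ℕ) : ℝ) / ((1 : ℕ) : ℝ) * convPow2 π 1 (1 - 1, l)
        rw [convPow2_one]
        norm_num
      · set n := k - a' with hn
        have ha'k : a' ≤ k := by omega
        have hterm : ∀ i ∈ Finset.range (k + 1), ∀ j ∈ Finset.range (l + 1),
            π (i, j) * convPow2 μ (a' + i) (k, l - j)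
              = if i ≤ n then
                  π (i, j) * ((((a' : ℝ) + i) / k) * convPow2 π k (n - i, l - j)) else 0 := by
          intro i hi j hj
          by_cases hin : i ≤ n
          · rcases Nat.eq_zero_or_pos (a' + i) with h0 | h1
            · have ha0 : a' = 0 := by omega
              have hi0 : i = 0 := by omega
              subst ha0; subst hi0
              rw [if_pos hin]
              have hz : convPow2 μ (0 + 0) (k, l - j) = 0 := by
                show (if ((k, l - j) : ℕ × ℕ) = (0, 0) then (1 : ℝ) else 0) = 0
                rw [if_neg (by simp only [Prod.mk.injEq]; omega)]
              rw [hz, mul_zero]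
              norm_num
            · have hle : a' + i ≤ k := by omega
              rw [if_pos hin, ih (a' + i) (l - j) h1 hle]
              rw [show k - (a' + i) = n - i by omega]
              push_cast
              ring
          · rw [if_neg hin, hsupp (a' + i) k (l - j) (by omega), mul_zero]
        rw [Finset.sum_congr rfl fun i hi => Finset.sum_congr rfl fun j hj => hterm i hi j hj]
        have hpull : ∀ i ∈ Finset.range (k + 1),
            (∑ j ∈ Finset.range (l + 1), if i ≤ n then
                π (i, j) * ((((a' : ℝ) + i) / k) * convPow2 π k (n - i, l - j)) else 0)
              = if i ≤ n then
                  (∑ j ∈ Finset.range (l + 1),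
                    π (i, j) * ((((a' : ℝ) + i) / k) * convPow2 π k (n - i, l - j))) else 0 := by
          intro i _
          split_ifs <;> simp
        rw [Finset.sum_congr rfl hpull, ← sum_extend (by omega : n ≤ k)]
        have hsplit : (∑ i ∈ Finset.range (n + 1), ∑ j ∈ Finset.range (l + 1),
              π (i, j) * ((((a' : ℝ) + i) / k) * convPow2 π k (n - i, l - j)))
            = ((a' : ℝ) / k) * conv2 π (convPow2 π k) (n, l)
              + (1 / (k : ℝ)) * conv2 (fun p => (p.1 : ℝ) * π p) (convPow2 π k) (n, l) := by
          show _ = ((a' : ℝ) / k) * (∑ i ∈ Finset.range (n + 1), ∑ j ∈ Finset.range (l + 1),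
              π (i, j) * convPow2 π k (n - i, l - j))
            + (1 / (k : ℝ)) * (∑ i ∈ Finset.range (n + 1), ∑ j ∈ Finset.range (l + 1),
              ((i : ℝ) * π (i, j)) * convPow2 π k (n - i, l - j))
          rw [Finset.mul_sum, Finset.mul_sum, ← Finset.sum_add_distrib]
          refine Finset.sum_congr rfl fun i _ => ?_
          rw [Finset.mul_sum, Finset.mul_sum, ← Finset.sum_add_distrib]
          refine Finset.sum_congr rfl fun j _ => ?_
          have hkne : (k : ℝ) ≠ 0 := by positivity
          field_simp
        rw [hsplit]
        have hS0 : conv2 π (convPow2 π k) (n, l) = convPow2 π (k + 1) (n, l) := by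
          rw [conv2_comm]; rfl
        have hS1 : conv2 (fun p => (p.1 : ℝ) * π p) (convPow2 π k) (n, l)
            = (n : ℝ) / ((k : ℝ) + 1) * convPow2 π (k + 1) (n, l) := by
          rw [conv2_comm]
          have hm := moment π k n l
          have hk1 : ((k : ℝ) + 1) ≠ 0 := by positivity
          field_simp
          linarith
        rw [hS0, hS1, show k + 1 - (a' + 1) = n by omega]
        have hncast : (n : ℝ) = (k : ℝ) - (a' : ℝ) := by
          rw [hn, Nat.cast_sub ha'k]
        have hkne : (k : ℝ) ≠ 0 := by positivity
        have hk1 : ((k : ℝ) + 1) ≠ 0 := by positivity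
        push_cast
        rw [hncast]
        field_simp
        ring
  intro a k l ha hak
  exact main k a l ha hak
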